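/- Let Q be an affine semigroup, Φ a face of Q, and ~ a congruence on Q + ℤΦ induced by a binomial ideal. Then the group ℤΦ acts freely on the set B of finite (bounded) congruence classes of Q + ℤΦ: for φ ∈ ℤΦ and a bounded class Γ, the translate φ + Γ is again a bounded class, and φ + Γ = Γ implies φ = 0. -/

import Mathlib

/-- The congruence `u ~_I v` iff `t^u - λ t^v ∈ I` for some nonzero `λ`. -/
def binomialRel {k Q : Type*} [Field k] [AddCommMonoid Q]
    (I : Ideal (AddMonoidAlgebra k Q)) (u v : Q) : Prop :=
  ∃ lam : k, lam ≠ 0 ∧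
    AddMonoidAlgebra.single u 1 - lam • AddMonoidAlgebra.single v 1 ∈ I

/-- A binomial ideal in the monoid algebra `k[Q]`. -/
def IsBinomialIdeal {k Q : Type*} [Field k] [AddCommMonoid Q]
    (I : Ideal (AddMonoidAlgebra k Q)) : Prop :=
  ∃ S : Set (AddMonoidAlgebra k Q), I = Ideal.span S ∧
    ∀ f ∈ S, ∃ (u v : Q) (lam : k),
      f = AddMonoidAlgebra.single u 1 - lam • AddMonoidAlgebra.single v 1

lemma binomialRel_refl {k Q : Type*} [Field k] [AddCommMonoid Q]
    (I : Ideal (AddMonoidAlgebra k Q)) (u : Q) : binomialRel I u u :=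
  ⟨1, one_ne_zero, by simp⟩

lemma binomialRel_add {k Q : Type*} [Field k] [AddCommMonoid Q]
    (I : Ideal (AddMonoidAlgebra k Q)) (w u v : Q) (h : binomialRel I u v) :
    binomialRel I (w + u) (w + v) := by
  obtain ⟨lam, hl, hm⟩ := h
  refine ⟨lam, hl, ?_⟩
  have := I.mul_mem_left (AddMonoidAlgebra.single w 1) hm
  convert this using 1
  rw [mul_sub, mul_smul_comm, AddMonoidAlgebra.single_mul_single,
    AddMonoidAlgebra.single_mul_single, one_mul]

/-- The group `ℤΦ` acts freely on the set of bounded (finite) congruence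
classes of `Q + ℤΦ` under the congruence induced by a binomial ideal: the
translate of a bounded class by `φ ∈ ℤΦ` is again a bounded class, and if the
translate equals the class itself then `φ = 0`. -/
theorem ZPhi_acts_freely_on_bounded_classes {ℓ : ℕ} {k : Type*} [Field k]
    (Q Φ : AddSubmonoid (Fin ℓ → ℤ)) (hQfg : Q.FG) (hΦQ : Φ ≤ Q)
    (hface : ∀ a ∈ Q, ∀ b ∈ Q, a + b ∈ Φ → a ∈ Φ ∧ b ∈ Φ)
    (QΦ : AddSubmonoid (Fin ℓ → ℤ))
    (hQΦ : QΦ = Q ⊔ AddSubmonoid.closure (Neg.neg '' (Φ : Set (Fin ℓ → ℤ))))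
    (I : Ideal (AddMonoidAlgebra k QΦ)) (hI : IsBinomialIdeal I)
    (φ : QΦ) (hφ : (φ : Fin ℓ → ℤ) ∈ AddSubgroup.closure (Φ : Set (Fin ℓ → ℤ)))
    (Γ : Set QΦ) (u₀ : QΦ) (hΓ : Γ = {v | binomialRel I u₀ v})
    (hbdd : Γ.Finite) :
    ((∃ u₁ : QΦ, (fun v => φ + v) '' Γ = {v | binomialRel I u₁ v}) ∧
      ((fun v => φ + v) '' Γ).Finite) ∧
    ((fun v => φ + v) '' Γ = Γ → φ = 0) := by
  -- Φ and -Φ lie in QΦ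
  have hQle : Q ≤ QΦ := by rw [hQΦ]; exact le_sup_left
  have hnegle : AddSubmonoid.closure (Neg.neg '' (Φ : Set (Fin ℓ → ℤ))) ≤ QΦ := by
    rw [hQΦ]; exact le_sup_right
  -- every element of the subgroup closure of Φ is in QΦ together with its negative
  have hT : ∀ x ∈ AddSubgroup.closure (Φ : Set (Fin ℓ → ℤ)), x ∈ QΦ ∧ -x ∈ QΦ := by
    intro x hx
    induction hx using AddSubgroup.closure_induction with
    | mem a ha =>
      refine ⟨hQle (hΦQ ha), hnegle (AddSubmonoid.subset_closure ⟨a, ha, rfl⟩)⟩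
    | zero => exact ⟨QΦ.zero_mem, by simpa using QΦ.zero_mem⟩
    | add a b _ _ ha hb =>
      exact ⟨QΦ.add_mem ha.1 hb.1, by rw [neg_add]; exact QΦ.add_mem ha.2 hb.2⟩
    | neg a _ ha => exact ⟨ha.2, by simpa using ha.1⟩
  have hnegφ : -(φ : Fin ℓ → ℤ) ∈ QΦ := (hT _ hφ).2
  set ψ : QΦ := ⟨-(φ : Fin ℓ → ℤ), hnegφ⟩ with hψ
  have hψφ : ψ + φ = 0 := by ext; simp [hψ]
  -- the translated class
  have himg : (fun v => φ + v) '' Γ = {v | binomialRel I (φ + u₀) v} := by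
    ext v
    constructor
    · rintro ⟨γ, hγ, rfl⟩
      rw [hΓ] at hγ
      exact binomialRel_add I φ u₀ γ hγ
    · intro hv
      refine ⟨ψ + v, ?_, ?_⟩
      · rw [hΓ]
        have := binomialRel_add I ψ _ _ hv
        rwa [← add_assoc, hψφ, zero_add] at this
      · show φ + (ψ + v) = v
        rw [← add_assoc, add_comm φ ψ, hψφ, zero_add]
  refine ⟨⟨⟨φ + u₀, himg⟩, hbdd.image _⟩, ?_⟩
  -- freeness
  intro hfix
  by_contra hφ0
  have hu₀ : u₀ ∈ Γ := by rw [hΓ]; exact binomialRel_refl I u₀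
  have hmem : ∀ n : ℕ, n • φ + u₀ ∈ Γ := by
    intro n
    induction n with
    | zero => simpa using hu₀
    | succ n ih =>
      have : φ + (n • φ + u₀) ∈ Γ := hfix ▸ ⟨_, ih, rfl⟩
      rwa [← add_assoc, ← succ_nsmul'] at this
  have hvec : (φ : Fin ℓ → ℤ) ≠ 0 := fun h => hφ0 (Subtype.ext h)
  obtain ⟨i, hi⟩ : ∃ i, (φ : Fin ℓ → ℤ) i ≠ 0 := by
    by_contra h; push_neg at h; exact hvec (funext h)
  have hinj : Function.Injective (fun n : ℕ => n • φ + u₀) := by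
    intro m n hmn
    have := congrFun (congrArg (fun x : QΦ => (x : Fin ℓ → ℤ)) hmn) i
    simp only [AddSubmonoid.coe_add, AddSubmonoidClass.coe_nsmul, Pi.add_apply,
      Pi.smul_apply, smul_eq_mul] at this
    have hmi := add_right_cancel this
    exact Nat.cast_injective (mul_right_cancel₀ hi hmi)
  exact (Set.infinite_of_injective_forall_mem hinj hmem) hbdd
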